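/- For D ∈ ℝ, D ≠ 0, the convolution of the distribution k₁(x,y) = |D|^{1/2} δ(y - Dx) on ℝ² with the Gaussian φ(x,y) = exp(-π(x²+y²)) is the function (x,y) ↦ λ₁ exp(-λ₂ (y - Dx)²), where λ₁ = |D|^{1/2}(1+D²)^{-1/2} and λ₂ = π/(1+D²). -/

import Mathlib

open Real MeasureTheory

theorem dilation_kernel_smoothed (D : ℝ) (hD : D ≠ 0) :
    ∀ x y : ℝ,
      |D| ^ ((1:ℝ)/2) * (∫ t : ℝ, Real.exp (-π * ((x - t) ^ 2 + (y - D * t) ^ 2)))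
        = |D| ^ ((1:ℝ)/2) * (1 + D ^ 2) ^ (-(1:ℝ)/2) *
            Real.exp (-(π / (1 + D ^ 2)) * (y - D * x) ^ 2) := by
  intro x y
  set a : ℝ := 1 + D ^ 2 with ha_def
  have ha : 0 < a := by positivity
  set m : ℝ := (x + D * y) / a with hm_def
  have key : ∀ t : ℝ, -π * ((x - t) ^ 2 + (y - D * t) ^ 2)
      = -(π * a) * (t - m) ^ 2 + (-(π / a) * (y - D * x) ^ 2) := by
    intro t
    rw [hm_def, ha_def]
    field_simp
    ring
  have hint : (∫ t : ℝ, Real.exp (-π * ((x - t) ^ 2 + (y - D * t) ^ 2)))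
      = Real.exp (-(π / a) * (y - D * x) ^ 2) * ∫ t : ℝ, Real.exp (-(π * a) * (t - m) ^ 2) := by
    rw [← integral_const_mul]
    congr 1
    ext t
    rw [key t, Real.exp_add]
    ring
  have hpa : 0 < π * a := by positivity
  have hg : (∫ t : ℝ, Real.exp (-(π * a) * (t - m) ^ 2)) = a ^ (-(1:ℝ)/2) := by
    rw [integral_sub_right_eq_self (μ := volume) (fun t : ℝ => Real.exp (-(π * a) * t ^ 2)) m]
    have := integral_gaussian (π * a)
    simp only [neg_mul] at this ⊢
    rw [this]
    rw [show π / (π * a) = a⁻¹ by field_simp]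
    rw [Real.sqrt_eq_rpow, ← Real.rpow_neg_one a, ← Real.rpow_mul ha.le]
    norm_num
  rw [hint, hg]
  ring
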